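/- Let H be a group, K ≤ H, φ ∈ Aut(H), and let A_K be as above. Then Inn(H) ∩ A_K = {γ_b : b ∈ N_H(K)}, i.e. the inner automorphisms lying in A_K are exactly those induced by elements of the normalizer of K. -/

import Mathlib

/-- The inner automorphisms of `H` lying in `A_K` are exactly those induced by
elements of the normalizer `N_H(K)`. -/
theorem inn_inter_AK {H : Type*} [Group H] (K : Subgroup H) (φ : H ≃* H) (δ : MulAut H) :
    ((∃ b : H, ∀ x : H, δ x = b⁻¹ * x * b) ∧
      K.map (δ : H →* H) = K ∧
      ∃ a : H, ∀ k ∈ K, φ (δ k) = a⁻¹ * δ (φ k) * a)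
    ↔ ∃ b ∈ Subgroup.normalizer (K : Set H), ∀ x : H, δ x = b⁻¹ * x * b := by
  have hc : ∀ x : H, (δ : H →* H) x = δ x := fun x => rfl
  constructor
  · rintro ⟨⟨b, hb⟩, hK, -⟩
    refine ⟨b, ?_, hb⟩
    have hinv : b⁻¹ ∈ Subgroup.normalizer (K : Set H) := by
      rw [Subgroup.mem_normalizer_iff]
      intro h
      constructor
      · intro hh
        have : δ h ∈ K.map (δ : H →* H) := Subgroup.mem_map_of_mem _ hh
        rw [hK, hb] at this
        simpa using this
      · intro hh
        have hh' : b⁻¹ * h * b⁻¹⁻¹ ∈ K.map (δ : H →* H) := by rw [hK]; exact hh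
        rcases hh' with ⟨k, hk, hk2⟩
        rw [hc, hb] at hk2
        have : k = h := by
          rw [inv_inv] at hk2
          exact mul_left_cancel (mul_right_cancel hk2)
        rwa [this] at hk
    simpa using (Subgroup.normalizer (K : Set H)).inv_mem hinv
  · rintro ⟨b, hbN, hb⟩
    refine ⟨⟨b, hb⟩, ?_, ⟨b⁻¹ * φ b, ?_⟩⟩
    · ext x
      simp only [Subgroup.mem_map, hc, hb]
      rw [Subgroup.mem_normalizer_iff] at hbN
      constructor
      · rintro ⟨k, hk, rfl⟩
        have := (hbN (b⁻¹ * k * b)).mpr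
        apply this
        simpa [mul_assoc] using hk
      · intro hx
        exact ⟨b * x * b⁻¹, (hbN x).mp hx, by group⟩
    · intro k hk
      rw [hb, hb, map_mul, map_mul, map_inv]
      group
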